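/- arXiv:1410.0664 — 3 statements merged into one kernel-verified Lean document; each statement's English description precedes it below -/
import Mathlib

section
/- Let ρ, ρ̄, and σ be positive semidefinite matrices of the same size, let λ > 0 with ρ̄ ≤ λσ, and let ε ∈ (0, tr ρ] with Δ(ρ, ρ̄) < ε. Then D_H^ε(ρ‖σ) ≤ log₂(λ) − log₂(1 − Δ(ρ, ρ̄)/ε). -/
open scoped BigOperators ComplexOrder
open Matrix Filter MeasureTheory

noncomputable section

namespace QMarkov

variable {ι : Type*}

/-- Positive semidefinite square root of a matrix (junk value `0` if not PSD). -/
noncomputable def matSqrt [Fintype ι] (A : Matrix ι ι ℂ) : Matrix ι ι ℂ := by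
  classical exact if h : A.PosSemidef then
      (h.1.eigenvectorUnitary : Matrix ι ι ℂ) *
        Matrix.diagonal (fun i => ((Real.sqrt (h.1.eigenvalues i) : ℝ) : ℂ)) *
        (star h.1.eigenvectorUnitary : Matrix ι ι ℂ) else 0

/-- Trace norm (sum of singular values). -/
noncomputable def traceNorm [Fintype ι] (A : Matrix ι ι ℂ) : ℝ :=
  (matSqrt (Aᴴ * A)).trace.re

/-- Fidelity `F(ρ,σ) = ‖√ρ √σ‖₁`. -/
noncomputable def fid [Fintype ι] (ρ σ : Matrix ι ι ℂ) : ℝ :=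
  traceNorm (matSqrt ρ * matSqrt σ)

/-- Generalized trace distance `Δ(ρ,σ) = ½‖ρ-σ‖₁ + ½|tr(ρ-σ)|`. -/
noncomputable def tdist [Fintype ι] (ρ σ : Matrix ι ι ℂ) : ℝ :=
  (1 / 2) * traceNorm (ρ - σ) + (1 / 2) * ‖(ρ - σ).trace‖

/-- Von Neumann entropy `H(ρ) = -∑ᵢ λᵢ log₂ λᵢ` (junk `0` if not Hermitian);
the convention `0 · log₂ 0 = 0` is automatic since `Real.logb 2 0 = 0`. -/
noncomputable def vnEntropy [Fintype ι] (A : Matrix ι ι ℂ) : ℝ := by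
  classical exact
    if h : A.IsHermitian then -∑ i, h.eigenvalues i * Real.logb 2 (h.eigenvalues i) else 0

/-- Matrix base-2 logarithm on the support of a Hermitian matrix (junk `0` if not Hermitian). -/
noncomputable def mlog [Fintype ι] (A : Matrix ι ι ℂ) : Matrix ι ι ℂ := by
  classical exact
    if h : A.IsHermitian then
      (h.eigenvectorUnitary : Matrix ι ι ℂ) *
        Matrix.diagonal (fun i => (Real.logb 2 (h.eigenvalues i) : ℂ)) *
        (h.eigenvectorUnitary : Matrix ι ι ℂ)ᴴ
    else 0

/-- Square root of the Moore–Penrose pseudoinverse of a Hermitian PSD matrix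
(junk `0` if not Hermitian). -/
noncomputable def pinvSqrt [Fintype ι] (A : Matrix ι ι ℂ) : Matrix ι ι ℂ := by
  classical exact
    if h : A.IsHermitian then
      (h.eigenvectorUnitary : Matrix ι ι ℂ) *
        Matrix.diagonal (fun i => ((Real.sqrt (h.eigenvalues i))⁻¹ : ℂ)) *
        (h.eigenvectorUnitary : Matrix ι ι ℂ)ᴴ
    else 0

/-- Relative entropy `D(ρ‖σ)`, equal to `tr(ρ(log₂ρ - log₂σ))/tr ρ` when the support of
`ρ` is contained in the support of `σ`, and `+∞` otherwise. -/
noncomputable def relEnt [Fintype ι] (ρ σ : Matrix ι ι ℂ) : EReal := by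
  classical exact
    if ∀ v : ι → ℂ, σ *ᵥ v = 0 → ρ *ᵥ v = 0 then
      (((ρ * (mlog ρ - mlog σ)).trace.re / ρ.trace.re : ℝ) : EReal)
    else ⊤

/-- `n`-fold tensor power of a matrix. -/
def tpow (A : Matrix ι ι ℂ) (n : ℕ) : Matrix (Fin n → ι) (Fin n → ι) ℂ :=
  Matrix.of fun x y => ∏ i, A (x i) (y i)

/-- Permutation invariance of a matrix on an `n`-fold tensor power space. -/
def permInv {n : ℕ} (ρ : Matrix (Fin n → ι) (Fin n → ι) ℂ) : Prop :=
  ∀ π : Equiv.Perm (Fin n), ∀ x y, ρ (x ∘ π) (y ∘ π) = ρ x y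

/-- Rank-one projector `|φ⟩⟨φ|`. -/
def vecOuter (φ : ι → ℂ) : Matrix ι ι ℂ :=
  Matrix.of fun i j => φ i * star (φ j)

variable {A B C D E : Type*}

/-- Partial trace over the second factor. -/
def ptr2 [Fintype E] (M : Matrix (D × E) (D × E) ℂ) : Matrix D D ℂ :=
  Matrix.of fun d d' => ∑ e, M (d, e) (d', e)

/-- Partial trace over the `n` copies of `E` of a matrix on `(D ⊗ E)^⊗n`. -/
def ptrPow [Fintype E] {n : ℕ} (M : Matrix (Fin n → D × E) (Fin n → D × E) ℂ) :
    Matrix (Fin n → D) (Fin n → D) ℂ :=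
  Matrix.of fun x y => ∑ e : Fin n → E, M (fun i => (x i, e i)) (fun i => (y i, e i))

/-- Marginal `ρ_AB` of a tripartite matrix. -/
def margAB [Fintype C] (ρ : Matrix (A × B × C) (A × B × C) ℂ) : Matrix (A × B) (A × B) ℂ :=
  Matrix.of fun x y => ∑ c, ρ (x.1, x.2, c) (y.1, y.2, c)

/-- Marginal `ρ_BC` of a tripartite matrix. -/
def margBC [Fintype A] (ρ : Matrix (A × B × C) (A × B × C) ℂ) : Matrix (B × C) (B × C) ℂ :=
  Matrix.of fun x y => ∑ a, ρ (a, x.1, x.2) (a, y.1, y.2)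

/-- Marginal `ρ_B` of a tripartite matrix. -/
def margB [Fintype A] [Fintype C] (ρ : Matrix (A × B × C) (A × B × C) ℂ) : Matrix B B ℂ :=
  Matrix.of fun b b' => ∑ a, ∑ c, ρ (a, b, c) (a, b', c)

/-- Conditional mutual information `I(A:C|B)_ρ = H(ρ_AB) + H(ρ_BC) - H(ρ_B) - H(ρ_ABC)`. -/
noncomputable def cmi [Fintype A] [Fintype B] [Fintype C]
    (ρ : Matrix (A × B × C) (A × B × C) ℂ) : ℝ :=
  vnEntropy (margAB ρ) + vnEntropy (margBC ρ) - vnEntropy (margB ρ) - vnEntropy ρ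

/-- Application of `I_A ⊗ T` to a matrix on `A ⊗ B`, for `T` a map from matrices over `B`
to matrices over `B ⊗ C`. -/
def extT (T : Matrix B B ℂ → Matrix (B × C) (B × C) ℂ)
    (ρ : Matrix (A × B) (A × B) ℂ) : Matrix (A × B × C) (A × B × C) ℂ :=
  Matrix.of fun x y => T (Matrix.of fun b b' => ρ (x.1, b) (y.1, b')) x.2 y.2

/-- `M ⊗ id` on `B ⊗ C`. -/
def kronId (M : Matrix B B ℂ) : Matrix (B × C) (B × C) ℂ := by
  classical exact Matrix.of fun x y => if x.2 = y.2 then M x.1 y.1 else 0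

end QMarkov

namespace QMarkov
variable {A B C : Type*}

/-- Marginal on the first and third factors of a tripartite matrix. -/
def marg13 [Fintype B] (ρ : Matrix (A × B × C) (A × B × C) ℂ) : Matrix (A × C) (A × C) ℂ :=
  Matrix.of fun x y => ∑ b, ρ (x.1, b, x.2) (y.1, b, y.2)

/-- Marginal on the third factor of a tripartite matrix. -/
def marg3 [Fintype A] [Fintype B] (ρ : Matrix (A × B × C) (A × B × C) ℂ) : Matrix C C ℂ :=
  Matrix.of fun c c' => ∑ a, ∑ b, ρ (a, b, c) (a, b, c')

/-- Conditional mutual information `I(first : second | third)` of a tripartite matrix, i.e.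
for `ρ` on `A ⊗ C ⊗ E` this is `I(A:C|E)_ρ = H(ρ_AE) + H(ρ_CE) - H(ρ_E) - H(ρ_ACE)`. -/
noncomputable def cmi13 [Fintype A] [Fintype B] [Fintype C]
    (ρ : Matrix (A × B × C) (A × B × C) ℂ) : ℝ :=
  vnEntropy (marg13 ρ) + vnEntropy (margBC ρ) - vnEntropy (marg3 ρ) - vnEntropy ρ

end QMarkov
namespace QMarkov

/-- The set defining the generalized relative entropy: values `tr(Qσ)/ε` over tests
`0 ≤ Q ≤ id` with `tr(Qρ) ≥ ε`. -/
def DHset {ι : Type*} [Fintype ι] [DecidableEq ι] (ε : ℝ) (ρ σ : Matrix ι ι ℂ) : Set ℝ :=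
  {x | ∃ Q : Matrix ι ι ℂ, Q.PosSemidef ∧ (1 - Q).PosSemidef ∧
    ε ≤ (Q * ρ).trace.re ∧ x = (Q * σ).trace.re / ε}

/-- Generalized relative entropy `D_H^ε(ρ‖σ)`, defined by `2^{-D_H^ε} = inf tr(Qσ)/ε`
(and `⊤` when the infimum is `0`, corresponding to `2^{-D} = 0`). -/
noncomputable def DH {ι : Type*} [Fintype ι] [DecidableEq ι] (ε : ℝ)
    (ρ σ : Matrix ι ι ℂ) : EReal := by
  classical exact
    if 0 < sInf (DHset ε ρ σ) then ((-Real.logb 2 (sInf (DHset ε ρ σ)) : ℝ) : EReal) else ⊤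


section Aux
variable {ι : Type*} [Fintype ι] [DecidableEq ι]

lemma psd_diag_re_nonneg {P : Matrix ι ι ℂ} (hP : P.PosSemidef) (i : ι) : 0 ≤ (P i i).re := by
  have := hP.re_dotProduct_nonneg (Pi.single i 1)
  simpa [dotProduct, mulVec, Pi.single_apply, mul_ite, ite_mul] using this

lemma trace_mul_eq_sum {H : Matrix ι ι ℂ} (h : H.IsHermitian) (Q : Matrix ι ι ℂ) :
    (Q * H).trace = ∑ i, ((star (h.eigenvectorUnitary : Matrix ι ι ℂ) * Q *
      (h.eigenvectorUnitary : Matrix ι ι ℂ)) i i) * (h.eigenvalues i : ℂ) := by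
  set U : Matrix ι ι ℂ := (h.eigenvectorUnitary : Matrix ι ι ℂ)
  set D : Matrix ι ι ℂ := Matrix.diagonal (RCLike.ofReal ∘ h.eigenvalues)
  have hspec : H = U * D * star U := h.spectral_theorem
  have hQH : Q * H = (Q * U) * D * star U := by rw [hspec]; noncomm_ring
  rw [hQH, Matrix.trace_mul_cycle]
  simp [Matrix.trace, Matrix.diag, Matrix.mul_diagonal, D, mul_comm, Matrix.mul_assoc]

lemma conj_psd {Q : Matrix ι ι ℂ} (hQ : Q.PosSemidef) (U : Matrix ι ι ℂ) :
    (star U * Q * U).PosSemidef := by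
  simpa [Matrix.star_eq_conjTranspose] using hQ.conjTranspose_mul_mul_same U

lemma trace_mul_re_eq {H : Matrix ι ι ℂ} (h : H.IsHermitian) (Q : Matrix ι ι ℂ) :
    (Q * H).trace.re = ∑ i, ((star (h.eigenvectorUnitary : Matrix ι ι ℂ) * Q *
      (h.eigenvectorUnitary : Matrix ι ι ℂ)) i i).re * h.eigenvalues i := by
  rw [trace_mul_eq_sum h Q, Complex.re_sum]
  congr 1; ext i
  simp [Complex.mul_re]

lemma diag_le_one {Q : Matrix ι ι ℂ} (hQ1 : (1 - Q).PosSemidef)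
    (U : Matrix ι ι ℂ) (hU : star U * U = 1) (i : ι) :
    ((star U * Q * U) i i).re ≤ 1 := by
  have h2 : (star U * (1 - Q) * U).PosSemidef := conj_psd hQ1 U
  have h3 : star U * (1 - Q) * U = 1 - star U * Q * U := by
    rw [Matrix.mul_sub, Matrix.sub_mul, Matrix.mul_one, hU]
  rw [h3] at h2
  have := psd_diag_re_nonneg h2 i
  simp only [Matrix.sub_apply, Matrix.one_apply_eq, Complex.sub_re, Complex.one_re] at this
  linarith

lemma traceNorm_hermitian {H : Matrix ι ι ℂ} (h : H.IsHermitian) :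
    traceNorm H = ∑ i, |h.eigenvalues i| := by
  classical
  have hH2 : (Hᴴ * H).PosSemidef := Matrix.posSemidef_conjTranspose_mul_self H
  set U : Matrix ι ι ℂ := (h.eigenvectorUnitary : Matrix ι ι ℂ) with hUdef
  have hU : star U * U = 1 := Matrix.UnitaryGroup.star_mul_self h.eigenvectorUnitary
  set d : ι → ℂ := fun i => (RCLike.ofReal |h.eigenvalues i| : ℂ) with hddef
  set M : Matrix ι ι ℂ := U * Matrix.diagonal d * star U with hMdef
  have hMpsd : M.PosSemidef := by
    rw [hMdef, Matrix.star_eq_conjTranspose U]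
    apply Matrix.PosSemidef.mul_mul_conjTranspose_same
    refine Matrix.posSemidef_diagonal_iff.mpr fun i => ?_
    rw [hddef]
    exact RCLike.ofReal_nonneg.mpr (abs_nonneg _)
  have hsq : M ^ 2 = Hᴴ * H := by
    have hspec : H = U * Matrix.diagonal (RCLike.ofReal ∘ h.eigenvalues) * star U :=
      h.spectral_theorem
    rw [pow_two, hMdef]
    calc U * Matrix.diagonal d * star U * (U * Matrix.diagonal d * star U)
        = U * (Matrix.diagonal d * Matrix.diagonal d) * star U := by
          simp only [Matrix.mul_assoc]
          rw [← Matrix.mul_assoc (star U) U, hU, Matrix.one_mul]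
      _ = U * (Matrix.diagonal (RCLike.ofReal ∘ h.eigenvalues) *
            Matrix.diagonal (RCLike.ofReal ∘ h.eigenvalues)) * star U := by
          rw [Matrix.diagonal_mul_diagonal, Matrix.diagonal_mul_diagonal]
          congr 1
          funext i
          simp only [hddef, Function.comp_apply, ← RCLike.ofReal_mul, abs_mul_abs_self]
      _ = Hᴴ * H := by
          conv_rhs => rw [h.eq, hspec]
          simp only [Matrix.mul_assoc]
          rw [← Matrix.mul_assoc (star U) U, hU, Matrix.one_mul]
  have hHH : Hᴴ * H = cfc (fun x : ℝ => x * x) H := by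
    rw [h.eq, cfc_mul (fun x : ℝ => x) (fun x => x) H, cfc_id' ℝ H]
  have hsqrt : matSqrt (Hᴴ * H) = cfc Real.sqrt (Hᴴ * H) := by
    rw [matSqrt, dif_pos hH2, hH2.1.cfc_eq, Matrix.IsHermitian.cfc, Unitary.conjStarAlgAut_apply]
    congr 2; ext i j; simp only [Matrix.diagonal_apply]; split_ifs <;> rfl
  have hM : M = cfc (fun x : ℝ => |x|) H := by
    rw [h.cfc_eq, Matrix.IsHermitian.cfc, Unitary.conjStarAlgAut_apply]; rfl
  have hms : matSqrt (Hᴴ * H) = M := by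
    rw [hsqrt, hHH, ← cfc_comp Real.sqrt (fun x : ℝ => x * x) H, hM]
    congr 1; funext x; exact Real.sqrt_mul_self_eq_abs x
  rw [traceNorm, hms, hMdef, Matrix.trace_mul_cycle, hU,
    Matrix.one_mul, Matrix.trace_diagonal, Complex.re_sum]
  simp [hddef]

lemma trace_hermitian {H : Matrix ι ι ℂ} (h : H.IsHermitian) :
    H.trace = ((∑ i, h.eigenvalues i : ℝ) : ℂ) := by
  have := trace_mul_eq_sum h 1
  rw [Matrix.one_mul] at this
  rw [this]
  push_cast
  congr 1; ext i
  rw [Matrix.mul_one, Matrix.UnitaryGroup.star_mul_self h.eigenvectorUnitary]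
  simp [Matrix.one_apply]

/-- Key estimate: for a test `0 ≤ Q ≤ 1`, `tr(Q(ρ-ρ̄)).re ≤ Δ(ρ,ρ̄)`. -/
lemma trace_test_le_tdist {Q ρ ρbar : Matrix ι ι ℂ}
    (hQ : Q.PosSemidef) (hQ1 : (1 - Q).PosSemidef)
    (hρ : ρ.IsHermitian) (hρbar : ρbar.IsHermitian) :
    (Q * (ρ - ρbar)).trace.re ≤ tdist ρ ρbar := by
  have h : (ρ - ρbar).IsHermitian := hρ.sub hρbar
  set U : Matrix ι ι ℂ := (h.eigenvectorUnitary : Matrix ι ι ℂ)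
  have hU : star U * U = 1 := Matrix.UnitaryGroup.star_mul_self h.eigenvectorUnitary
  have h1 : (Q * (ρ - ρbar)).trace.re
      = ∑ i, ((star U * Q * U) i i).re * h.eigenvalues i := trace_mul_re_eq h Q
  have h2 : ∀ i, ((star U * Q * U) i i).re * h.eigenvalues i
      ≤ (|h.eigenvalues i| + h.eigenvalues i) / 2 := by
    intro i
    have hq0 : 0 ≤ ((star U * Q * U) i i).re := psd_diag_re_nonneg (conj_psd hQ U) i
    have hq1 : ((star U * Q * U) i i).re ≤ 1 := diag_le_one hQ1 U hU i
    rcases le_or_gt 0 (h.eigenvalues i) with hpos | hneg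
    · rw [abs_of_nonneg hpos]
      nlinarith
    · rw [abs_of_neg hneg]
      nlinarith
  have h3 : (Q * (ρ - ρbar)).trace.re
      ≤ (∑ i, |h.eigenvalues i|) / 2 + (∑ i, h.eigenvalues i) / 2 := by
    rw [h1]
    refine le_trans (Finset.sum_le_sum fun i _ => h2 i) (le_of_eq ?_)
    rw [← Finset.sum_div, Finset.sum_add_distrib, add_div]
  have h4 : (∑ i, h.eigenvalues i) ≤ ‖(ρ - ρbar).trace‖ := by
    rw [trace_hermitian h, Complex.norm_real, Real.norm_eq_abs]
    exact le_abs_self _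
  rw [tdist, traceNorm_hermitian h]
  linarith

/-- `tr(QS).re ≥ 0` for PSD `Q`, `S`. -/
lemma trace_psd_mul_nonneg {Q S : Matrix ι ι ℂ}
    (hQ : Q.PosSemidef) (hS : S.PosSemidef) : 0 ≤ (Q * S).trace.re := by
  rw [trace_mul_re_eq hS.1 Q]
  apply Finset.sum_nonneg
  intro i _
  exact mul_nonneg (psd_diag_re_nonneg (conj_psd hQ _) i) (hS.eigenvalues_nonneg i)

end Aux

/-- Upper bound on `D_H^ε(ρ‖σ)` from an operator `ρ̄ ≤ λσ` close to `ρ`. -/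
theorem DH_upper_bound
    {ι : Type*} [Fintype ι] [DecidableEq ι]
    (ρ ρbar σ : Matrix ι ι ℂ)
    (hρ : ρ.PosSemidef) (hρbar : ρbar.PosSemidef) (hσ : σ.PosSemidef)
    (lam : ℝ) (hlam : 0 < lam) (hle : (lam • σ - ρbar).PosSemidef)
    (ε : ℝ) (hε : 0 < ε) (hεtr : ε ≤ ρ.trace.re) (hΔ : tdist ρ ρbar < ε) :
    DH ε ρ σ ≤ ((Real.logb 2 lam - Real.logb 2 (1 - tdist ρ ρbar / ε) : ℝ) : EReal) := by
  set μ := tdist ρ ρbar with hμ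
  set c : ℝ := (ε - μ) / (lam * ε) with hc
  have hεμpos : 0 < ε - μ := by linarith
  have hcpos : 0 < c := div_pos hεμpos (mul_pos hlam hε)
  have hlb : ∀ x ∈ DHset ε ρ σ, c ≤ x := by
    rintro x ⟨Q, hQ, hQ1, htr, rfl⟩
    have hkey : (Q * (ρ - ρbar)).trace.re ≤ μ := trace_test_le_tdist hQ hQ1 hρ.1 hρbar.1
    have hsplit : (Q * (ρ - ρbar)).trace.re = (Q * ρ).trace.re - (Q * ρbar).trace.re := by
      rw [Matrix.mul_sub, Matrix.trace_sub, Complex.sub_re]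
    have hbar : ε - μ ≤ (Q * ρbar).trace.re := by
      rw [hsplit] at hkey; linarith
    have hpsd : 0 ≤ (Q * (lam • σ - ρbar)).trace.re := trace_psd_mul_nonneg hQ hle
    have hlin : (Q * (lam • σ - ρbar)).trace.re
        = lam * (Q * σ).trace.re - (Q * ρbar).trace.re := by
      rw [Matrix.mul_sub, Matrix.trace_sub, Complex.sub_re, Matrix.mul_smul, Matrix.trace_smul,
        Complex.smul_re, smul_eq_mul]
    rw [hlin] at hpsd
    rw [hc, div_le_div_iff₀ (mul_pos hlam hε) hε]
    nlinarith
  have hne : (DHset ε ρ σ).Nonempty := by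
    refine ⟨σ.trace.re / ε, 1, Matrix.PosSemidef.one, ?_, ?_, by rw [Matrix.one_mul]⟩
    · simpa using (Matrix.PosSemidef.zero (n := ι) (R := ℂ))
    · rw [Matrix.one_mul]; exact hεtr
  have hinf : c ≤ sInf (DHset ε ρ σ) := le_csInf hne hlb
  have hpos : 0 < sInf (DHset ε ρ σ) := lt_of_lt_of_le hcpos hinf
  rw [DH, if_pos hpos, EReal.coe_le_coe_iff]
  have hlog : Real.logb 2 c ≤ Real.logb 2 (sInf (DHset ε ρ σ)) :=
    Real.logb_le_logb_of_le one_lt_two hcpos hinf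
  have hq : (0:ℝ) < 1 - μ / ε := by
    rw [sub_pos, div_lt_one hε]; exact hΔ
  have hceq : Real.logb 2 c = Real.logb 2 (1 - μ / ε) - Real.logb 2 lam := by
    have hcval : c = (1 - μ / ε) / lam := by
      rw [hc, show (1 - μ / ε) = (ε - μ) / ε by field_simp, div_div, mul_comm ε lam]
    rw [hcval, Real.logb_div (ne_of_gt hq) (ne_of_gt hlam)]
  linarith

end QMarkov
end
end

section
/- For any nonzero positive semidefinite matrices ρ and σ of the same size, D(ρ‖σ) ≥ −2·log₂(F(ρ, σ)/tr ρ). -/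
open scoped BigOperators ComplexOrder
open Matrix Filter MeasureTheory

noncomputable section

namespace QMarkov

set_option maxHeartbeats 1000000

lemma trace_diag_conj {ι : Type*} [Fintype ι] [DecidableEq ι] (a b : ι → ℝ) (W : Matrix ι ι ℂ) :
    (diagonal (fun i => (a i : ℂ)) * W * diagonal (fun j => (b j : ℂ)) * Wᴴ).trace
      = ∑ i, ∑ j, ((a i * b j * Complex.normSq (W i j) : ℝ) : ℂ) := by
  have h1 : ∀ i j, (diagonal (fun i => (a i:ℂ)) * W * diagonal (fun j => (b j:ℂ))) i j
      = (a i : ℂ) * W i j * (b j : ℂ) := by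
    intro i j
    rw [Matrix.mul_diagonal, Matrix.diagonal_mul]
  simp only [Matrix.trace, Matrix.diag, Matrix.mul_apply, h1, Matrix.conjTranspose_apply]
  refine Finset.sum_congr rfl fun i _ => Finset.sum_congr rfl fun j _ => ?_
  push_cast
  rw [Complex.star_def]
  linear_combination ((a i : ℂ) * (b j : ℂ)) * Complex.mul_conj (W i j)

lemma trace_conj {ι : Type*} [Fintype ι] [DecidableEq ι] (V M : Matrix ι ι ℂ) (h : star V * V = 1) :
    (V * M * star V).trace = M.trace := by
  rw [Matrix.trace_mul_comm, ← Matrix.mul_assoc, h, Matrix.one_mul]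

lemma trace_conj_pair {ι : Type*} [Fintype ι] (U A V B : Matrix ι ι ℂ) :
    (U * A * star U * (V * B * star V)).trace
      = (A * (star U * V) * B * star (star U * V)).trace := by
  rw [show star (star U * V) = star V * U from by rw [StarMul.star_mul, star_star]]
  have e1 : U * A * star U * (V * B * star V) = U * (A * (star U * V) * B * star V) := by
    simp only [Matrix.mul_assoc]
  rw [e1, Matrix.trace_mul_comm]
  simp only [Matrix.mul_assoc]

lemma re_trace_le_traceNorm {ι : Type*} [Fintype ι] (X : Matrix ι ι ℂ) : X.trace.re ≤ traceNorm X := by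
  classical
  have hM : (Xᴴ * X).PosSemidef := posSemidef_conjTranspose_mul_self X
  have hVsV : star (hM.1.eigenvectorUnitary : Matrix ι ι ℂ) * (hM.1.eigenvectorUnitary : Matrix ι ι ℂ) = 1 :=
    Unitary.coe_star_mul_self hM.1.eigenvectorUnitary
  have hVVs : (hM.1.eigenvectorUnitary : Matrix ι ι ℂ) * star (hM.1.eigenvectorUnitary : Matrix ι ι ℂ) = 1 :=
    Unitary.coe_mul_star_self hM.1.eigenvectorUnitary
  set V : Matrix ι ι ℂ := (hM.1.eigenvectorUnitary : Matrix ι ι ℂ) with hV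
  set lam : ι → ℝ := hM.1.eigenvalues with hlam
  have hlam0 : ∀ i, 0 ≤ lam i := fun i => hM.eigenvalues_nonneg i
  have h1 : traceNorm X = ∑ i, Real.sqrt (lam i) := by
    rw [traceNorm, matSqrt, dif_pos hM,
      trace_conj _ _ hVsV, Matrix.trace_diagonal]
    simp [Complex.re_sum]; rfl
  have hdiag : star V * (Xᴴ * X) * V = diagonal (Complex.ofReal ∘ lam) := by
    simpa [Unitary.conjStarAlgAut_star_apply] using hM.1.conjStarAlgAut_star_eigenvectorUnitary
  have h2 : X.trace = (star V * X * V).trace := by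
    rw [← trace_conj V (star V * X * V) hVsV]
    rw [← Matrix.mul_assoc, ← Matrix.mul_assoc, hVVs, Matrix.one_mul, Matrix.mul_assoc,
      hVVs, Matrix.mul_one]
  rw [h1, h2, Matrix.trace, Complex.re_sum]
  refine Finset.sum_le_sum fun i _ => ?_
  set Y : Matrix ι ι ℂ := X * V with hY
  have hcol : ∑ k, Complex.normSq (V k i) = 1 := by
    have := congrArg (fun M => (M i i).re) hVsV
    simpa [Matrix.mul_apply, Matrix.conjTranspose_apply, Complex.re_sum,
      Complex.normSq_eq_conj_mul_self, Complex.normSq_apply, Matrix.one_apply, Matrix.star_eq_conjTranspose] using this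
  have hXcol : ∑ k, Complex.normSq (Y k i) = lam i := by
    have hYY : Yᴴ * Y = star V * (Xᴴ * X) * V := by
      rw [hY, Matrix.conjTranspose_mul, Matrix.star_eq_conjTranspose]
      noncomm_ring
    have := congrArg (fun M => (M i i).re) (hYY.trans hdiag)
    simpa [Matrix.mul_apply, Matrix.conjTranspose_apply, Complex.re_sum,
      Complex.normSq_eq_conj_mul_self, Complex.normSq_apply, Matrix.diagonal_apply] using this
  have hdd : (star V * X * V) i i = ∑ k, (starRingEnd ℂ) (V k i) * Y k i := by
    rw [Matrix.mul_assoc, ← hY, Matrix.star_eq_conjTranspose, Matrix.mul_apply]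
    simp [Matrix.conjTranspose_apply]
  rw [Matrix.diag_apply, hdd]
  calc (∑ k, (starRingEnd ℂ) (V k i) * Y k i).re
      ≤ ‖∑ k, (starRingEnd ℂ) (V k i) * Y k i‖ := Complex.re_le_norm _
    _ ≤ ∑ k, ‖(starRingEnd ℂ) (V k i) * Y k i‖ := by
        simpa using norm_sum_le Finset.univ (fun k => (starRingEnd ℂ) (V k i) * Y k i)
    _ = ∑ k, ‖V k i‖ * ‖Y k i‖ := by
        simp [_root_.map_mul]
    _ ≤ Real.sqrt (lam i) := by
        have cs := Finset.sum_mul_sq_le_sq_mul_sq Finset.univ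
          (fun k => ‖V k i‖) (fun k => ‖Y k i‖)
        have e1 : ∑ k, ‖V k i‖ ^ 2 = 1 := by
          simpa [Complex.sq_norm] using hcol
        have e2 : ∑ k, ‖Y k i‖ ^ 2 = lam i := by
          simpa [Complex.sq_norm] using hXcol
        rw [e1, e2, one_mul] at cs
        have hnn : 0 ≤ ∑ k, ‖V k i‖ * ‖Y k i‖ :=
          Finset.sum_nonneg fun k _ => mul_nonneg (norm_nonneg _) (norm_nonneg _)
        have h3 := Real.sqrt_le_sqrt cs
        rwa [Real.sqrt_sq hnn] at h3

lemma main_ineq {ι : Type*} [Fintype ι] (ρ σ : Matrix ι ι ℂ) (hρ : ρ.PosSemidef) (hσ : σ.PosSemidef)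
    (hρ0 : ρ ≠ 0) (hsupp : ∀ v : ι → ℂ, σ *ᵥ v = 0 → ρ *ᵥ v = 0) :
    0 < fid ρ σ ∧
      -2 * Real.logb 2 (fid ρ σ / ρ.trace.re)
        ≤ (ρ * (mlog ρ - mlog σ)).trace.re / ρ.trace.re := by
  classical
  set U : Matrix ι ι ℂ := (hρ.1.eigenvectorUnitary : Matrix ι ι ℂ) with hUdef
  set V : Matrix ι ι ℂ := (hσ.1.eigenvectorUnitary : Matrix ι ι ℂ) with hVdef
  set p : ι → ℝ := hρ.1.eigenvalues with hpdef
  set q : ι → ℝ := hσ.1.eigenvalues with hqdef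
  have hUsU : star U * U = 1 := Unitary.coe_star_mul_self hρ.1.eigenvectorUnitary
  have hUUs : U * star U = 1 := Unitary.coe_mul_star_self hρ.1.eigenvectorUnitary
  have hVsV : star V * V = 1 := Unitary.coe_star_mul_self hσ.1.eigenvectorUnitary
  have hVVs : V * star V = 1 := Unitary.coe_mul_star_self hσ.1.eigenvectorUnitary
  have hp0 : ∀ i, 0 ≤ p i := fun i => hρ.eigenvalues_nonneg i
  have hq0 : ∀ i, 0 ≤ q i := fun i => hσ.eigenvalues_nonneg i
  have specρ : ρ = U * diagonal (fun i => ((p i : ℝ) : ℂ)) * star U := hρ.1.spectral_theorem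
  have specσ : σ = V * diagonal (fun i => ((q i : ℝ) : ℂ)) * star V := hσ.1.spectral_theorem
  have hmρ : mlog ρ = U * diagonal (fun i => ((Real.logb 2 (p i) : ℝ) : ℂ)) * star U := by
    rw [mlog, dif_pos hρ.1, Matrix.star_eq_conjTranspose]
  have hmσ : mlog σ = V * diagonal (fun i => ((Real.logb 2 (q i) : ℝ) : ℂ)) * star V := by
    rw [mlog, dif_pos hσ.1, Matrix.star_eq_conjTranspose]
  have hsρ : matSqrt ρ = U * diagonal (fun i => ((Real.sqrt (p i) : ℝ) : ℂ)) * star U := by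
    rw [matSqrt, dif_pos hρ]
  have hsσ : matSqrt σ = V * diagonal (fun i => ((Real.sqrt (q i) : ℝ) : ℂ)) * star V := by
    rw [matSqrt, dif_pos hσ]
  clear_value U V p q
  have hc0 : ∀ i j, (0:ℝ) ≤ Complex.normSq ((star U * V) i j) :=
    fun i j => Complex.normSq_nonneg _
  -- the key mixed trace formula
  have key : ∀ a b : ι → ℝ,
      ((U * diagonal (fun i => ((a i : ℝ) : ℂ)) * star U) *
        (V * diagonal (fun j => ((b j : ℝ) : ℂ)) * star V)).trace.re
      = ∑ i, ∑ j, a i * b j * Complex.normSq ((star U * V) i j) := by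
    intro a b
    rw [trace_conj_pair, Matrix.star_eq_conjTranspose (star U * V), trace_diag_conj]
    simp [Complex.re_sum]
  -- row sums of c
  have hWWs : (star U * V) * star (star U * V) = 1 := by
    rw [StarMul.star_mul, star_star,
      show star U * V * (star V * U) = star U * (V * star V) * U from by
        simp only [Matrix.mul_assoc],
      hVVs, Matrix.mul_one, hUsU]
  have hc1 : ∀ i, ∑ j, Complex.normSq ((star U * V) i j) = 1 := by
    intro i
    have h0 : ((star U * V) * star (star U * V)) i i
        = ∑ j, ((Complex.normSq ((star U * V) i j) : ℝ) : ℂ) := by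
      rw [Matrix.mul_apply]
      refine Finset.sum_congr rfl fun j _ => ?_
      rw [Matrix.star_apply, Complex.star_def, Complex.mul_conj]
    rw [hWWs, Matrix.one_apply_eq] at h0
    have := congrArg Complex.re h0.symm
    simpa [Complex.re_sum] using this
  -- trace of ρ
  have htr : ρ.trace.re = ∑ i, p i := by
    rw [specρ, trace_conj _ _ hUsU, Matrix.trace_diagonal]
    simp [Complex.re_sum]
  have htrpos : 0 < ρ.trace.re := by
    have hex : ∃ i, p i ≠ 0 := by
      by_contra h
      push_neg at h
      apply hρ0
      rw [specρ]
      have hd : (diagonal (fun i => ((p i : ℝ) : ℂ)) : Matrix ι ι ℂ) = 0 := by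
        ext i j
        by_cases hij : i = j <;> simp [Matrix.diagonal_apply, hij, h i, h j]
      rw [hd, Matrix.mul_zero, Matrix.zero_mul]
    obtain ⟨i0, hi0⟩ := hex
    rw [htr]
    exact Finset.sum_pos' (fun i _ => hp0 i)
      ⟨i0, Finset.mem_univ _, lt_of_le_of_ne (hp0 i0) (Ne.symm hi0)⟩
  -- trace formulas
  have trρσ : (ρ * mlog σ).trace.re
      = ∑ i, ∑ j, p i * Real.logb 2 (q j) * Complex.normSq ((star U * V) i j) := by
    rw [hmσ, specρ]; exact key _ _
  have trρρ : (ρ * mlog ρ).trace.re = ∑ i, p i * Real.logb 2 (p i) := by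
    rw [hmρ, specρ, trace_conj_pair, hUsU, star_one, Matrix.mul_one, Matrix.mul_one,
      Matrix.diagonal_mul_diagonal, Matrix.trace_diagonal]
    simp [Complex.re_sum, ← Complex.ofReal_mul]
  have trS : (matSqrt ρ * matSqrt σ).trace.re
      = ∑ i, ∑ j, Real.sqrt (p i) * Real.sqrt (q j) * Complex.normSq ((star U * V) i j) := by
    rw [hsρ, hsσ]; exact key _ _
  have hS_le : (matSqrt ρ * matSqrt σ).trace.re ≤ fid ρ σ := re_trace_le_traceNorm _
  -- support condition
  have hz : ∀ i j, q j = 0 → p i * Complex.normSq ((star U * V) i j) = 0 := by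
    intro i j hqj
    have hσV : σ * V = V * diagonal (fun i => ((q i : ℝ) : ℂ)) := by
      rw [specσ, Matrix.mul_assoc, hVsV, Matrix.mul_one]
    have hσv : σ *ᵥ (fun k => V k j) = 0 := by
      funext k
      have e : (σ *ᵥ fun k' => V k' j) k = (σ * V) k j := by
        simp [Matrix.mulVec, dotProduct, Matrix.mul_apply]
      rw [Pi.zero_apply, e, hσV, Matrix.mul_diagonal, hqj]
      simp
    have hρv := hsupp _ hσv
    have hρV : ∀ k, (ρ * V) k j = 0 := by
      intro k
      have e : (ρ * V) k j = (ρ *ᵥ fun k' => V k' j) k := by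
        simp [Matrix.mulVec, dotProduct, Matrix.mul_apply]
      rw [e, hρv, Pi.zero_apply]
    have e2 : star U * (ρ * V) = diagonal (fun i => ((p i : ℝ) : ℂ)) * (star U * V) := by
      rw [specρ]
      simp only [Matrix.mul_assoc]
      rw [← Matrix.mul_assoc, hUsU, Matrix.one_mul]
    have h2 : (diagonal (fun i => ((p i : ℝ) : ℂ)) * (star U * V)) i j = 0 := by
      rw [← e2, Matrix.mul_apply]
      apply Finset.sum_eq_zero
      intro k _
      rw [hρV k, mul_zero]
    rw [Matrix.diagonal_mul] at h2
    rcases mul_eq_zero.mp h2 with h | h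
    · rw [Complex.ofReal_eq_zero.mp h, zero_mul]
    · rw [show Complex.normSq ((star U * V) i j) = 0 from by rw [h]; simp, mul_zero]
  -- abstract the overlap weights
  obtain ⟨c, hc0, hc1, hz, trρσ, trS⟩ :
      ∃ c : ι → ι → ℝ, (∀ i j, 0 ≤ c i j) ∧ (∀ i, ∑ j, c i j = 1) ∧
        (∀ i j, q j = 0 → p i * c i j = 0) ∧
        ((ρ * mlog σ).trace.re = ∑ i, ∑ j, p i * Real.logb 2 (q j) * c i j) ∧
        ((matSqrt ρ * matSqrt σ).trace.re
          = ∑ i, ∑ j, Real.sqrt (p i) * Real.sqrt (q j) * c i j) :=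
    ⟨fun i j => Complex.normSq ((star U * V) i j), hc0, hc1, hz, trρσ, trS⟩
  clear hWWs key specρ specσ hmρ hmσ hsρ hsσ hUsU hUUs hVsV hVVs hUdef hVdef hpdef hqdef hsupp
  -- now pure real analysis
  set T := ρ.trace.re with hT
  set F := fid ρ σ with hF
  set t : Finset (ι × ι) :=
    Finset.univ.filter (fun ij : ι × ι => p ij.1 * c ij.1 ij.2 ≠ 0) with htdef
  have hmemt : ∀ ij ∈ t, 0 < p ij.1 ∧ 0 < c ij.1 ij.2 ∧ 0 < q ij.2 := by
    intro ij hij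
    rw [htdef, Finset.mem_filter] at hij
    obtain ⟨hp, hc⟩ := mul_ne_zero_iff.mp hij.2
    have hpp : 0 < p ij.1 := lt_of_le_of_ne (hp0 _) (Ne.symm hp)
    have hcc : 0 < c ij.1 ij.2 := lt_of_le_of_ne (hc0 _ _) (Ne.symm hc)
    refine ⟨hpp, hcc, lt_of_le_of_ne (hq0 _) (Ne.symm fun hq => ?_)⟩
    exact hij.2 (hz _ _ hq)
  set w : ι × ι → ℝ := fun ij => p ij.1 * c ij.1 ij.2 / T with hwdef
  set x : ι × ι → ℝ := fun ij => Real.sqrt (q ij.2 / p ij.1) with hxdef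
  have hsum_all : ∑ ij : ι × ι, p ij.1 * c ij.1 ij.2 = T := by
    rw [Fintype.sum_prod_type]
    calc ∑ i, ∑ j, p i * c i j = ∑ i, p i * ∑ j, c i j := by
          simp_rw [Finset.mul_sum]
      _ = ∑ i, p i := by simp [hc1]
      _ = T := htr.symm
  have hw_sum : ∑ ij ∈ t, w ij = 1 := by
    rw [htdef]
    rw [Finset.sum_filter_of_ne (fun ij _ hwij => by
      intro hpc
      apply hwij
      rw [hwdef]
      simp only
      rw [hpc, zero_div])]
    rw [hwdef]
    simp only
    rw [← Finset.sum_div, hsum_all, div_self htrpos.ne']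
  have hw0 : ∀ ij ∈ t, 0 ≤ w ij :=
    fun ij _ => div_nonneg (mul_nonneg (hp0 _) (hc0 _ _)) htrpos.le
  have hxmem : ∀ ij ∈ t, x ij ∈ Set.Ioi (0:ℝ) := by
    intro ij hij
    obtain ⟨hpp, hcc, hqq⟩ := hmemt ij hij
    exact Set.mem_Ioi.mpr (Real.sqrt_pos.mpr (div_pos hqq hpp))
  have hjen := (strictConcaveOn_log_Ioi.concaveOn).le_map_sum hw0 hw_sum hxmem
  simp only [smul_eq_mul] at hjen
  -- the sum inside the log
  have hGeq : ∑ ij ∈ t, w ij * x ij = (matSqrt ρ * matSqrt σ).trace.re / T := by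
    rw [trS]
    have step1 : ∀ ij ∈ t, w ij * x ij
        = Real.sqrt (p ij.1) * Real.sqrt (q ij.2) * c ij.1 ij.2 / T := by
      intro ij hij
      obtain ⟨hpp, -, -⟩ := hmemt ij hij
      have e : Real.sqrt (p ij.1) * Real.sqrt (p ij.1) = p ij.1 := Real.mul_self_sqrt (hp0 _)
      have hsp : Real.sqrt (p ij.1) ≠ 0 := (Real.sqrt_pos.mpr hpp).ne'
      rw [hwdef, hxdef]
      simp only
      rw [Real.sqrt_div (hq0 ij.2), div_mul_div_comm,
        div_eq_div_iff (mul_ne_zero htrpos.ne' hsp) htrpos.ne']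
      linear_combination (-(c ij.1 ij.2 * Real.sqrt (q ij.2) * T)) * e
    rw [Finset.sum_congr rfl step1, ← Finset.sum_div]
    congr 1
    calc ∑ ij ∈ t, Real.sqrt (p ij.1) * Real.sqrt (q ij.2) * c ij.1 ij.2
        = ∑ ij : ι × ι, Real.sqrt (p ij.1) * Real.sqrt (q ij.2) * c ij.1 ij.2 := by
          refine Finset.sum_subset (Finset.subset_univ _) ?_
          intro ij _ hij
          rw [htdef, Finset.mem_filter] at hij
          push_neg at hij
          have hpc : p ij.1 * c ij.1 ij.2 = 0 := hij (Finset.mem_univ _)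
          rcases mul_eq_zero.mp hpc with h | h
          · rw [h, Real.sqrt_zero, zero_mul, zero_mul]
          · rw [h, mul_zero]
      _ = ∑ i, ∑ j, Real.sqrt (p i) * Real.sqrt (q j) * c i j := by
          rw [Fintype.sum_prod_type]
  have hGle : ∑ ij ∈ t, w ij * x ij ≤ F / T := by
    rw [hGeq]
    exact (div_le_div_iff_of_pos_right htrpos).mpr hS_le
  have hGpos : 0 < ∑ ij ∈ t, w ij * x ij := by
    obtain ⟨ij0, hij0, hne⟩ := Finset.exists_ne_zero_of_sum_ne_zero
      (by rw [hw_sum]; exact one_ne_zero)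
    refine Finset.sum_pos' (fun ij hij => mul_nonneg (hw0 ij hij) (Real.sqrt_nonneg _))
      ⟨ij0, hij0, ?_⟩
    exact mul_pos (lt_of_le_of_ne (hw0 ij0 hij0) (Ne.symm hne)) (hxmem ij0 hij0)
  have hFpos : 0 < F := by
    have h1 : 0 < F / T := lt_of_lt_of_le hGpos hGle
    have h2 := mul_pos h1 htrpos
    rwa [div_mul_cancel₀ _ htrpos.ne'] at h2
  have hjen2 : ∑ ij ∈ t, w ij * Real.log (x ij) ≤ Real.log (F / T) :=
    le_trans hjen (Real.log_le_log hGpos hGle)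
  set E := ∑ ij ∈ t, p ij.1 * c ij.1 ij.2 * (Real.log (p ij.1) - Real.log (q ij.2)) with hE
  have hlhs : ∑ ij ∈ t, w ij * Real.log (x ij) = -E / (2 * T) := by
    have step2 : ∀ ij ∈ t, w ij * Real.log (x ij)
        = -(p ij.1 * c ij.1 ij.2 * (Real.log (p ij.1) - Real.log (q ij.2))) / (2 * T) := by
      intro ij hij
      obtain ⟨hpp, hcc, hqq⟩ := hmemt ij hij
      rw [hwdef, hxdef]
      simp only
      rw [Real.log_sqrt (div_nonneg (hq0 _) (hp0 _)), Real.log_div hqq.ne' hpp.ne']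
      ring
    rw [Finset.sum_congr rfl step2, ← Finset.sum_div, hE, ← Finset.sum_neg_distrib]
  have hEineq : -(Real.log (F / T)) * (2 * T) ≤ E := by
    have h1 := hjen2
    rw [hlhs] at h1
    have h2T : (0:ℝ) < 2 * T := by positivity
    have h3 := (div_le_iff₀ h2T).mp h1
    linarith
  refine ⟨hFpos, ?_⟩
  have hD : (ρ * (mlog ρ - mlog σ)).trace.re
      = (∑ i, p i * Real.logb 2 (p i)) - ∑ i, ∑ j, p i * Real.logb 2 (q j) * c i j := by
    rw [Matrix.mul_sub, Matrix.trace_sub, Complex.sub_re, trρρ, trρσ]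
  have hlog2 : (0:ℝ) < Real.log 2 := Real.log_pos one_lt_two
  have hEfull : E = (∑ i, p i * Real.log (p i)) - ∑ i, ∑ j, p i * c i j * Real.log (q j) := by
    have h1 : E = ∑ ij : ι × ι, p ij.1 * c ij.1 ij.2
        * (Real.log (p ij.1) - Real.log (q ij.2)) := by
      rw [hE]
      refine Finset.sum_subset (Finset.subset_univ _) ?_
      intro ij _ hij
      rw [htdef, Finset.mem_filter] at hij
      push_neg at hij
      rw [hij (Finset.mem_univ _), zero_mul]
    rw [h1, Fintype.sum_prod_type]
    simp_rw [mul_sub, Finset.sum_sub_distrib]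
    congr 1
    refine Finset.sum_congr rfl fun i _ => ?_
    calc ∑ j, p i * c i j * Real.log (p i)
        = ∑ j, c i j * (p i * Real.log (p i)) := Finset.sum_congr rfl fun j _ => by ring
      _ = (∑ j, c i j) * (p i * Real.log (p i)) := (Finset.sum_mul _ _ _).symm
      _ = p i * Real.log (p i) := by rw [hc1 i, one_mul]
  have hbp : ∑ i, p i * Real.logb 2 (p i) = (∑ i, p i * Real.log (p i)) / Real.log 2 := by
    rw [Finset.sum_div]
    refine Finset.sum_congr rfl fun i _ => ?_
    rw [Real.logb]
    ring
  have hbq : ∑ i, ∑ j, p i * Real.logb 2 (q j) * c i j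
      = (∑ i, ∑ j, p i * c i j * Real.log (q j)) / Real.log 2 := by
    rw [Finset.sum_div]
    refine Finset.sum_congr rfl fun i _ => ?_
    rw [Finset.sum_div]
    refine Finset.sum_congr rfl fun j _ => ?_
    rw [Real.logb]
    ring
  rw [hD, hbp, hbq, div_sub_div_same, ← hEfull, Real.logb, div_div,
    show -2 * (Real.log (F / T) / Real.log 2) = -(Real.log (F / T)) * 2 / Real.log 2 from by ring,
    div_le_div_iff₀ hlog2 (mul_pos hlog2 htrpos)]
  calc -(Real.log (F / T)) * 2 * (Real.log 2 * T)
      = (-(Real.log (F / T)) * (2 * T)) * Real.log 2 := by ring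
    _ ≤ E * Real.log 2 := mul_le_mul_of_nonneg_right hEineq hlog2.le


/-- `D(ρ‖σ) ≥ -2 log₂(F(ρ,σ)/tr ρ)` (the right-hand side being `+∞` when the
fidelity vanishes). -/
theorem relEnt_ge_fidelity_bound
    {ι : Type*} [Fintype ι]
    (ρ σ : Matrix ι ι ℂ) (hρ : ρ.PosSemidef) (hσ : σ.PosSemidef)
    (hρ0 : ρ ≠ 0) (hσ0 : σ ≠ 0) :
    (if 0 < fid ρ σ then (((-2) * Real.logb 2 (fid ρ σ / ρ.trace.re) : ℝ) : EReal) else ⊤) ≤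
      relEnt ρ σ := by
  by_cases hsupp : ∀ v : ι → ℂ, σ *ᵥ v = 0 → ρ *ᵥ v = 0
  · obtain ⟨hF, hle⟩ := main_ineq ρ σ hρ hσ hρ0 hsupp
    rw [relEnt, if_pos hsupp, if_pos hF]
    exact EReal.coe_le_coe_iff.mpr hle
  · rw [relEnt, if_neg hsupp]
    exact le_top

end QMarkov
end
end

section
/- Let ρ, ρ', and σ be positive semidefinite matrices of the same size. Then |F(ρ, σ) − F(ρ', σ)|² ≤ ‖ρ − ρ'‖₁ · tr(σ). -/
open scoped BigOperators ComplexOrder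
open Matrix Filter MeasureTheory

noncomputable section

namespace QMarkov


/-! ### Auxiliary development for Statement 16 -/

section FidelityAux
variable {ι : Type*} [Fintype ι]

lemma matSqrt_posSemidef {A : Matrix ι ι ℂ} (hA : A.PosSemidef) :
    (matSqrt A).PosSemidef := by
  classical
  rw [matSqrt, dif_pos hA]
  rw [star_eq_conjTranspose]
  apply Matrix.PosSemidef.mul_mul_conjTranspose_same
  rw [posSemidef_diagonal_iff]
  exact fun i => Complex.zero_le_real.2 (Real.sqrt_nonneg _)

lemma matSqrt_mul_self' {A : Matrix ι ι ℂ} (hA : A.PosSemidef) :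
    matSqrt A * matSqrt A = A := by
  classical
  rw [matSqrt, dif_pos hA]
  have hU : (star hA.1.eigenvectorUnitary : Matrix ι ι ℂ) * hA.1.eigenvectorUnitary = 1 :=
    Unitary.coe_star_mul_self _
  rw [show ∀ (U D S : Matrix ι ι ℂ), U * D * S * (U * D * S) = U * (D * (S * U) * D) * S from
    fun U D S => by simp only [Matrix.mul_assoc], hU, Matrix.mul_one, diagonal_mul_diagonal]
  conv_rhs => rw [hA.1.spectral_theorem, Unitary.conjStarAlgAut_apply]
  congr 2
  congr 1
  funext i
  simp [← Complex.ofReal_mul, Real.mul_self_sqrt (hA.eigenvalues_nonneg i)]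

lemma trace_sq_re_nonneg (A : Matrix ι ι ℂ) : 0 ≤ ((Aᴴ * A).trace).re := by
  rw [Matrix.trace, Complex.re_sum]
  apply Finset.sum_nonneg
  intro j _
  rw [Matrix.diag_apply, Matrix.mul_apply, Complex.re_sum]
  apply Finset.sum_nonneg
  intro k _
  simp only [conjTranspose_apply, RCLike.star_def, Complex.mul_re, Complex.conj_re,
    Complex.conj_im]
  nlinarith [sq_nonneg ((A k j).re), sq_nonneg ((A k j).im)]

lemma psd_trace_re_nonneg {P : Matrix ι ι ℂ} (hP : P.PosSemidef) : 0 ≤ P.trace.re := by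
  classical
  rw [Matrix.trace, Complex.re_sum]
  apply Finset.sum_nonneg
  intro j _
  have h : 0 ≤ P j j := hP.diag_nonneg
  exact (Complex.le_def.1 h).1

lemma traceNorm_nonneg' (M : Matrix ι ι ℂ) : 0 ≤ traceNorm M :=
  psd_trace_re_nonneg (matSqrt_posSemidef (posSemidef_conjTranspose_mul_self M))

lemma trace_mul_psd_re_nonneg {P Q : Matrix ι ι ℂ} (hP : P.PosSemidef) (hQ : Q.PosSemidef) :
    0 ≤ ((P * Q).trace).re := by
  have hP2 := matSqrt_mul_self' hP
  have hQ2 := matSqrt_mul_self' hQ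
  have hPh : (matSqrt P)ᴴ = matSqrt P := (matSqrt_posSemidef hP).1
  have hQh : (matSqrt Q)ᴴ = matSqrt Q := (matSqrt_posSemidef hQ).1
  have gen : ∀ (X Y : Matrix ι ι ℂ), Xᴴ = X → Yᴴ = Y →
      0 ≤ ((X * X * (Y * Y)).trace).re := by
    intro X Y hX hY
    have hkey : (X * X * (Y * Y)).trace = ((Y * X)ᴴ * (Y * X)).trace := by
      rw [conjTranspose_mul, hX, hY,
        show X * X * (Y * Y) = X * (X * Y * Y) from by simp only [Matrix.mul_assoc],
        Matrix.trace_mul_comm]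
      simp only [Matrix.mul_assoc]
    rw [hkey]
    exact trace_sq_re_nonneg _
  have := gen (matSqrt P) (matSqrt Q) hPh hQh
  rw [hP2, hQ2] at this
  exact this

lemma trace_cs (A B : Matrix ι ι ℂ) :
    ‖(Aᴴ * B).trace‖ ≤
      Real.sqrt (((Aᴴ * A).trace).re) * Real.sqrt (((Bᴴ * B).trace).re) := by
  let v : Matrix ι ι ℂ → EuclideanSpace ℂ (ι × ι) :=
    fun M => (WithLp.equiv 2 ((ι × ι) → ℂ)).symm (fun p => M p.1 p.2)
  let x := v A
  let y := v B
  have key : ∀ (M N : Matrix ι ι ℂ), (inner ℂ (v M) (v N) : ℂ) = (Mᴴ * N).trace := by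
    intro M N
    rw [Matrix.trace, PiLp.inner_apply, Fintype.sum_prod_type]
    rw [Finset.sum_comm]
    apply Finset.sum_congr rfl
    intro j _
    rw [Matrix.diag_apply, Matrix.mul_apply]
    apply Finset.sum_congr rfl
    intro k _
    simp [v, conjTranspose_apply, RCLike.inner_apply, mul_comm]
  have hxy : (inner ℂ x y : ℂ) = (Aᴴ * B).trace := key A B
  have hx : ‖x‖ = Real.sqrt (((Aᴴ * A).trace).re) := by
    rw [@norm_eq_sqrt_re_inner ℂ, key A A]; rfl
  have hy : ‖y‖ = Real.sqrt (((Bᴴ * B).trace).re) := by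
    rw [@norm_eq_sqrt_re_inner ℂ, key B B]; rfl
  calc ‖(Aᴴ * B).trace‖ = ‖(inner ℂ x y : ℂ)‖ := by
        rw [hxy]
    _ ≤ ‖x‖ * ‖y‖ := norm_inner_le_norm x y
    _ = _ := by rw [hx, hy]

section cd
variable [DecidableEq ι]

/-- conjugated real diagonal matrix -/
noncomputable def cd (V : Matrix ι ι ℂ) (d : ι → ℝ) : Matrix ι ι ℂ :=
  V * diagonal (fun i => (d i : ℂ)) * Vᴴ

variable {V : Matrix ι ι ℂ} (hV : Vᴴ * V = 1) (hV' : V * Vᴴ = 1) (d e : ι → ℝ)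

lemma cd_congr {d e : ι → ℝ} (h : ∀ i, d i = e i) : cd V d = cd V e := by
  have : d = e := funext h
  rw [this]

include hV in
lemma cd_mul : cd V d * cd V e = cd V (fun i => d i * e i) := by
  simp only [cd, Matrix.mul_assoc]
  rw [← Matrix.mul_assoc Vᴴ V, hV, Matrix.one_mul, ← Matrix.mul_assoc (diagonal _),
    diagonal_mul_diagonal]
  congr 2
  · ext i; simp

lemma cd_conjTranspose : (cd V d)ᴴ = cd V d := by
  have h : (diagonal (fun i => (d i : ℂ)))ᴴ = diagonal (fun i => (d i : ℂ)) := by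
    rw [diagonal_conjTranspose]
    congr 1
    ext i
    simp [Pi.star_def, Complex.conj_ofReal]
  simp only [cd, conjTranspose_mul, conjTranspose_conjTranspose, h, Matrix.mul_assoc]

include hV in
lemma cd_trace : (cd V d).trace = ∑ i, (d i : ℂ) := by
  rw [cd, Matrix.trace_mul_cycle, hV, Matrix.one_mul, trace_diagonal]

lemma cd_posSemidef (hd : ∀ i, 0 ≤ d i) : (cd V d).PosSemidef := by
  apply Matrix.PosSemidef.mul_mul_conjTranspose_same
  rw [posSemidef_diagonal_iff]
  exact fun i => Complex.zero_le_real.2 (hd i)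

include hV' in
lemma cd_one : cd V (fun _ => 1) = 1 := by
  simp only [cd]
  have : (fun i : ι => ((1 : ℝ) : ℂ)) = fun _ => (1 : ℂ) := by ext i; simp
  rw [this, diagonal_one, Matrix.mul_one, hV']

lemma cd_sub : cd V d - cd V e = cd V (fun i => d i - e i) := by
  simp only [cd, ← Matrix.sub_mul, ← Matrix.mul_sub, diagonal_sub]
  congr 2
  ext i; simp

lemma cd_add : cd V d + cd V e = cd V (fun i => d i + e i) := by
  simp only [cd, ← Matrix.add_mul, ← Matrix.mul_add, diagonal_add]
  congr 2
  ext i; simp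

lemma cd_zero : cd V (fun _ => 0) = 0 := by
  simp only [cd]
  have : (fun i : ι => ((0 : ℝ) : ℂ)) = fun _ => (0 : ℂ) := by ext i; simp
  rw [this, diagonal_zero, Matrix.mul_zero, Matrix.zero_mul]

include hV in
lemma cd_unconj (f : ι → ℝ) : Vᴴ * cd V f * V = diagonal (fun i => (f i : ℂ)) := by
  simp only [cd, Matrix.mul_assoc]
  rw [hV, Matrix.mul_one, ← Matrix.mul_assoc, hV, Matrix.one_mul]

include hV in
lemma cd_inj {d e : ι → ℝ} (h : cd V d = cd V e) : ∀ i, d i = e i := by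
  have h2 : Vᴴ * cd V d * V = Vᴴ * cd V e * V := by rw [h]
  rw [cd_unconj hV d, cd_unconj hV e] at h2
  intro i
  have h3 := congrFun (congrFun h2 i) i
  simp only [diagonal_apply_eq] at h3
  exact_mod_cast h3

lemma exists_spectral {A : Matrix ι ι ℂ} (hA : A.IsHermitian) :
    ∃ (V : Matrix ι ι ℂ) (lam : ι → ℝ), Vᴴ * V = 1 ∧ V * Vᴴ = 1 ∧ A = cd V lam := by
  refine ⟨hA.eigenvectorUnitary, hA.eigenvalues, ?_, ?_, ?_⟩
  · rw [← Matrix.star_eq_conjTranspose]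
    exact mem_unitaryGroup_iff'.mp hA.eigenvectorUnitary.2
  · rw [← Matrix.star_eq_conjTranspose]
    exact mem_unitaryGroup_iff.mp hA.eigenvectorUnitary.2
  · rw [cd, ← Matrix.star_eq_conjTranspose]
    exact hA.spectral_theorem

lemma exists_spectral_psd {A : Matrix ι ι ℂ} (hA : A.PosSemidef) :
    ∃ (V : Matrix ι ι ℂ) (lam : ι → ℝ), Vᴴ * V = 1 ∧ V * Vᴴ = 1 ∧
      A = cd V lam ∧ (∀ i, 0 ≤ lam i) ∧
      matSqrt A = cd V (fun i => Real.sqrt (lam i)) := by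
  refine ⟨hA.1.eigenvectorUnitary, hA.1.eigenvalues, ?_, ?_, ?_, ?_, ?_⟩
  · rw [← Matrix.star_eq_conjTranspose]
    exact mem_unitaryGroup_iff'.mp hA.1.eigenvectorUnitary.2
  · rw [← Matrix.star_eq_conjTranspose]
    exact mem_unitaryGroup_iff.mp hA.1.eigenvectorUnitary.2
  · rw [cd, ← Matrix.star_eq_conjTranspose]
    exact hA.1.spectral_theorem
  · exact fun i => hA.eigenvalues_nonneg i
  · rw [matSqrt, dif_pos hA]
    rw [cd, ← Matrix.star_eq_conjTranspose]
    congr!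

lemma psd_le_one_of_idem {Q : Matrix ι ι ℂ} (hQ : Q.PosSemidef) (h2 : Q * Q = Q) :
    (1 - Q).PosSemidef := by
  obtain ⟨V, mu, hV, hV', hQeq, -, -⟩ := exists_spectral_psd hQ
  have h3 : cd V (fun i => mu i * mu i) = cd V mu := by
    rw [← cd_mul hV, ← hQeq, h2, hQeq]
  have h4 := cd_inj hV h3
  rw [← cd_one hV', hQeq, cd_sub]
  apply cd_posSemidef
  intro i
  have h5 : mu i * (mu i - 1) = 0 := by rw [mul_sub, mul_one, h4 i, sub_self]
  rcases mul_eq_zero.1 h5 with h | h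
  · rw [h]; norm_num
  · have : mu i = 1 := by linarith
    rw [this]; norm_num

end cd

variable [DecidableEq ι] in
lemma exists_polar (M : Matrix ι ι ℂ) :
    ∃ W : Matrix ι ι ℂ, (1 - Wᴴ * W).PosSemidef ∧ (1 - W * Wᴴ).PosSemidef ∧
      ((Wᴴ * M).trace).re = traceNorm M := by
  classical
  obtain ⟨V, lam, hV, hV', hMM, hlam, hS⟩ :=
    exists_spectral_psd (posSemidef_conjTranspose_mul_self M)
  set isr : ι → ℝ := fun i => (Real.sqrt (lam i))⁻¹ with hisr
  set ind : ι → ℝ := fun i => if lam i = 0 then 0 else 1 with hind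
  have e1 : ∀ i, isr i * lam i * isr i = ind i := by
    intro i
    by_cases h : lam i = 0
    · simp [hisr, hind, h]
    · have hpos : 0 < Real.sqrt (lam i) :=
        Real.sqrt_pos.2 (lt_of_le_of_ne (hlam i) (Ne.symm h))
      simp only [hisr, hind, if_neg h]
      field_simp
      exact (Real.sq_sqrt (hlam i)).symm
  have e2 : ∀ i, isr i * lam i = Real.sqrt (lam i) := by
    intro i
    by_cases h : lam i = 0
    · simp [hisr, h]
    · have hpos : 0 < Real.sqrt (lam i) :=
        Real.sqrt_pos.2 (lt_of_le_of_ne (hlam i) (Ne.symm h))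
      simp only [hisr]
      field_simp
      exact (Real.sq_sqrt (hlam i)).symm
  have e4 : ∀ i, isr i * ind i = isr i := by
    intro i
    by_cases h : lam i = 0
    · simp [hisr, hind, h]
    · simp [hisr, hind, h]
  have e5 : ∀ i, 0 ≤ 1 - ind i := by
    intro i
    by_cases h : lam i = 0 <;> simp [hind, h]
  set W := M * cd V isr with hW
  have hCs : (cd V isr)ᴴ = cd V isr := cd_conjTranspose isr
  have hWW : Wᴴ * W = cd V ind := by
    rw [hW, conjTranspose_mul, hCs, Matrix.mul_assoc, ← Matrix.mul_assoc Mᴴ M, hMM,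
      ← Matrix.mul_assoc, cd_mul hV, cd_mul hV]
    exact cd_congr e1
  have hWind : W * cd V ind = W := by
    rw [hW, Matrix.mul_assoc, cd_mul hV]
    exact congrArg (M * ·) (cd_congr e4)
  refine ⟨W, ?_, ?_, ?_⟩
  · rw [hWW, ← cd_one hV', cd_sub]
    exact cd_posSemidef _ e5
  · have hQpsd : (W * Wᴴ).PosSemidef := posSemidef_self_mul_conjTranspose W
    have hQQ : (W * Wᴴ) * (W * Wᴴ) = W * Wᴴ := by
      rw [Matrix.mul_assoc W Wᴴ (W * Wᴴ), ← Matrix.mul_assoc Wᴴ W Wᴴ, hWW,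
        ← Matrix.mul_assoc, hWind]
    exact psd_le_one_of_idem hQpsd hQQ
  · have htr : Wᴴ * M = matSqrt (Mᴴ * M) := by
      rw [hS, hW, conjTranspose_mul, hCs, Matrix.mul_assoc, hMM, cd_mul hV]
      exact cd_congr e2
    rw [htr, traceNorm]

variable [DecidableEq ι] in
lemma re_trace_le_traceNorm_s16 (M W : Matrix ι ι ℂ) (hW : (1 - Wᴴ * W).PosSemidef) :
    ((Wᴴ * M).trace).re ≤ traceNorm M := by
  classical
  obtain ⟨V, lam, hV, hV', hMM, hlam, hS⟩ :=
    exists_spectral_psd (posSemidef_conjTranspose_mul_self M)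
  set isr : ι → ℝ := fun i => (Real.sqrt (lam i))⁻¹ with hisr
  set ind : ι → ℝ := fun i => if lam i = 0 then 0 else 1 with hind
  set fr : ι → ℝ := fun i => Real.sqrt (Real.sqrt (lam i)) with hfr
  have e1 : ∀ i, isr i * lam i * isr i = ind i := by
    intro i
    by_cases h : lam i = 0
    · simp [hisr, hind, h]
    · have hpos : 0 < Real.sqrt (lam i) :=
        Real.sqrt_pos.2 (lt_of_le_of_ne (hlam i) (Ne.symm h))
      simp only [hisr, hind, if_neg h]
      field_simp
      exact (Real.sq_sqrt (hlam i)).symm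
  have e6 : ∀ i, (ind i - 1) * lam i * (ind i - 1) = 0 := by
    intro i
    by_cases h : lam i = 0 <;> simp [hind, h]
  have e7 : ∀ i, fr i * fr i = Real.sqrt (lam i) := fun i =>
    Real.mul_self_sqrt (Real.sqrt_nonneg _)
  have e8 : ∀ i, fr i * ind i * fr i = Real.sqrt (lam i) := by
    intro i
    by_cases h : lam i = 0
    · simp [hfr, hind, h]
    · rw [hind]; simp only [if_neg h, mul_one]; exact e7 i
  have e9 : ∀ i, isr i * Real.sqrt (lam i) = ind i := by
    intro i
    by_cases h : lam i = 0
    · simp [hisr, hind, h]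
    · have hpos : 0 < Real.sqrt (lam i) :=
        Real.sqrt_pos.2 (lt_of_le_of_ne (hlam i) (Ne.symm h))
      simp only [hisr, hind, if_neg h]
      field_simp
  set T := cd V fr with hT
  set W0 := M * cd V isr with hW0
  have hTh : Tᴴ = T := cd_conjTranspose fr
  have hTT : T * T = matSqrt (Mᴴ * M) := by
    rw [hT, cd_mul hV, hS]
    exact cd_congr e7
  have hCs : (cd V isr)ᴴ = cd V isr := cd_conjTranspose isr
  have hW0W0 : W0ᴴ * W0 = cd V ind := by
    rw [hW0, conjTranspose_mul, hCs, Matrix.mul_assoc, ← Matrix.mul_assoc Mᴴ M, hMM,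
      ← Matrix.mul_assoc, cd_mul hV, cd_mul hV]
    exact cd_congr e1
  have hM0 : M * cd V ind = M := by
    have hsub : M * cd V ind - M = M * cd V (fun i => ind i - 1) := by
      have h9 : cd V (fun i => ind i - 1) = cd V ind - 1 := by
        rw [← cd_sub, cd_one hV']
      rw [h9, Matrix.mul_sub, Matrix.mul_one]
    have hN : (M * cd V ind - M)ᴴ * (M * cd V ind - M) = 0 := by
      rw [hsub, conjTranspose_mul, cd_conjTranspose, Matrix.mul_assoc,
        ← Matrix.mul_assoc Mᴴ M, hMM, ← Matrix.mul_assoc, cd_mul hV, cd_mul hV]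
      rw [cd_congr (e := fun _ => 0) e6, cd_zero]
    exact sub_eq_zero.mp (conjTranspose_mul_self_eq_zero.mp hN)
  have hMW0 : W0 * (T * T) = M := by
    rw [hTT, hS, hW0, Matrix.mul_assoc, cd_mul hV]
    rw [show (fun i => isr i * Real.sqrt (lam i)) = ind from funext e9]
    exact hM0
  have key : (Wᴴ * M).trace = ((W * T)ᴴ * (W0 * T)).trace := by
    conv_lhs => rw [← hMW0]
    rw [conjTranspose_mul, hTh]
    rw [show (T * Wᴴ) * (W0 * T) = T * (Wᴴ * (W0 * T)) from by simp only [Matrix.mul_assoc]]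
    rw [Matrix.trace_mul_comm T]
    simp only [Matrix.mul_assoc]
  have hSpsd : (matSqrt (Mᴴ * M)).PosSemidef :=
    matSqrt_posSemidef (posSemidef_conjTranspose_mul_self M)
  have b1 : (((W * T)ᴴ * (W * T)).trace).re ≤ traceNorm M := by
    have h1 : ((W * T)ᴴ * (W * T)).trace = ((Wᴴ * W) * matSqrt (Mᴴ * M)).trace := by
      rw [conjTranspose_mul, hTh,
        show T * Wᴴ * (W * T) = T * (Wᴴ * W) * T from by simp only [Matrix.mul_assoc],
        Matrix.trace_mul_cycle T (Wᴴ * W) T, Matrix.trace_mul_comm, Matrix.mul_assoc, hTT]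
      simp only [Matrix.mul_assoc]
    have h2 : 0 ≤ (((1 - Wᴴ * W) * matSqrt (Mᴴ * M)).trace).re :=
      trace_mul_psd_re_nonneg hW hSpsd
    have h3 : (((1 - Wᴴ * W) * matSqrt (Mᴴ * M)).trace).re
        = traceNorm M - (((Wᴴ * W) * matSqrt (Mᴴ * M)).trace).re := by
      rw [Matrix.sub_mul, Matrix.one_mul, trace_sub, Complex.sub_re, traceNorm]
    rw [h1]
    linarith
  have b2 : (((W0 * T)ᴴ * (W0 * T)).trace).re = traceNorm M := by
    have h1 : (W0 * T)ᴴ * (W0 * T) = matSqrt (Mᴴ * M) := by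
      rw [conjTranspose_mul, hTh,
        show T * W0ᴴ * (W0 * T) = T * (W0ᴴ * W0) * T from by simp only [Matrix.mul_assoc],
        hW0W0, cd_mul hV, cd_mul hV, hS]
      exact cd_congr e8
    rw [h1, traceNorm]
  have hcs := trace_cs (W * T) (W0 * T)
  have hre : ((Wᴴ * M).trace).re ≤ ‖((W * T)ᴴ * (W0 * T)).trace‖ := by
    rw [key]
    exact Complex.re_le_norm _
  have h0 : 0 ≤ traceNorm M := traceNorm_nonneg' M
  calc ((Wᴴ * M).trace).re ≤ ‖((W * T)ᴴ * (W0 * T)).trace‖ := hre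
    _ ≤ Real.sqrt ((((W * T)ᴴ * (W * T)).trace).re)
        * Real.sqrt ((((W0 * T)ᴴ * (W0 * T)).trace).re) := hcs
    _ ≤ Real.sqrt (traceNorm M) * Real.sqrt (traceNorm M) := by
        apply mul_le_mul (Real.sqrt_le_sqrt b1) (le_of_eq (by rw [b2]))
          (Real.sqrt_nonneg _) (Real.sqrt_nonneg _)
    _ = traceNorm M := Real.mul_self_sqrt h0

lemma traceNorm_triangle (X Y : Matrix ι ι ℂ) :
    traceNorm (X + Y) ≤ traceNorm X + traceNorm Y := by
  classical
  obtain ⟨W, hc, -, htr⟩ := exists_polar (X + Y)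
  have hsplit : ((Wᴴ * (X + Y)).trace).re = ((Wᴴ * X).trace).re + ((Wᴴ * Y).trace).re := by
    rw [Matrix.mul_add, trace_add, Complex.add_re]
  have h1 := re_trace_le_traceNorm_s16 X W hc
  have h2 := re_trace_le_traceNorm_s16 Y W hc
  linarith [htr, hsplit]

lemma traceNorm_neg (X : Matrix ι ι ℂ) : traceNorm (-X) = traceNorm X := by
  rw [traceNorm, traceNorm, conjTranspose_neg, Matrix.neg_mul, Matrix.mul_neg, neg_neg]

lemma traceNorm_mul_le (X Y : Matrix ι ι ℂ) :
    traceNorm (X * Y) ≤ Real.sqrt (((Xᴴ * X).trace).re) * Real.sqrt (((Yᴴ * Y).trace).re) := by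
  classical
  obtain ⟨W, hc, hc', htr⟩ := exists_polar (X * Y)
  have key : (Wᴴ * (X * Y)).trace = ((Xᴴ * W)ᴴ * Y).trace := by
    rw [conjTranspose_mul, conjTranspose_conjTranspose]
    simp only [Matrix.mul_assoc]
  have hcs := trace_cs (Xᴴ * W) Y
  have hb : (((Xᴴ * W)ᴴ * (Xᴴ * W)).trace).re ≤ ((Xᴴ * X).trace).re := by
    have e : ((Xᴴ * W)ᴴ * (Xᴴ * W)).trace = ((X * Xᴴ) * (W * Wᴴ)).trace := by
      rw [conjTranspose_mul, conjTranspose_conjTranspose]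
      rw [show Wᴴ * X * (Xᴴ * W) = Wᴴ * ((X * Xᴴ) * W) from by simp only [Matrix.mul_assoc]]
      rw [Matrix.trace_mul_comm, Matrix.mul_assoc]
    have e2 : 0 ≤ (((X * Xᴴ) * (1 - W * Wᴴ)).trace).re :=
      trace_mul_psd_re_nonneg (posSemidef_self_mul_conjTranspose X) hc'
    have e3 : (((X * Xᴴ) * (1 - W * Wᴴ)).trace).re
        = ((X * Xᴴ).trace).re - (((X * Xᴴ) * (W * Wᴴ)).trace).re := by
      rw [Matrix.mul_sub, Matrix.mul_one, trace_sub, Complex.sub_re]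
    have e4 := congrArg Complex.re (Matrix.trace_mul_comm X Xᴴ)
    rw [e]
    linarith
  calc traceNorm (X * Y) = ((Wᴴ * (X * Y)).trace).re := htr.symm
    _ ≤ ‖((Xᴴ * W)ᴴ * Y).trace‖ := by rw [key]; exact Complex.re_le_norm _
    _ ≤ Real.sqrt ((((Xᴴ * W)ᴴ * (Xᴴ * W)).trace).re) * Real.sqrt (((Yᴴ * Y).trace).re) := hcs
    _ ≤ Real.sqrt (((Xᴴ * X).trace).re) * Real.sqrt (((Yᴴ * Y).trace).re) :=
        mul_le_mul_of_nonneg_right (Real.sqrt_le_sqrt hb) (Real.sqrt_nonneg _)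

lemma powers_stormer {R R' : Matrix ι ι ℂ} (hR : R.PosSemidef) (hR' : R'.PosSemidef) :
    (((matSqrt R - matSqrt R') * (matSqrt R - matSqrt R')).trace).re
      ≤ traceNorm (R - R') := by
  classical
  set A := matSqrt R with hA
  set B := matSqrt R' with hB
  have hApsd := matSqrt_posSemidef hR
  have hBpsd := matSqrt_posSemidef hR'
  have hC : (A - B).IsHermitian := hApsd.1.sub hBpsd.1
  obtain ⟨V, g, hV, hV', hCeq⟩ := exists_spectral hC
  set s : ι → ℝ := fun i => if 0 ≤ g i then 1 else -1 with hs
  set W := cd V s with hWdef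
  have hWh : Wᴴ = W := cd_conjTranspose s
  have hWunit : Wᴴ * W = 1 := by
    rw [hWh, hWdef, cd_mul hV,
      cd_congr (e := fun _ => 1) (fun i => by by_cases h : 0 ≤ g i <;> simp [hs, h]),
      cd_one hV']
  have habs : W * (A - B) = cd V (fun i => |g i|) := by
    rw [hWdef, hCeq, cd_mul hV]
    exact cd_congr (fun i => by
      by_cases h : 0 ≤ g i
      · simp [hs, h, abs_of_nonneg h]
      · simp [hs, h, abs_of_neg (lt_of_not_ge h)])
  have habs' : (A - B) * W = cd V (fun i => |g i|) := by
    rw [hWdef, hCeq, cd_mul hV]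
    exact cd_congr (fun i => by
      by_cases h : 0 ≤ g i
      · simp [hs, h, abs_of_nonneg h]
      · simp [hs, h, abs_of_neg (lt_of_not_ge h)])
  have h2 : (((A - B) * A).trace).re ≤ ((cd V (fun i => |g i|) * A).trace).re := by
    have hpsd : (cd V (fun i => |g i|) - (A - B)).PosSemidef := by
      rw [hCeq, cd_sub]
      exact cd_posSemidef _ (fun i => by simp [abs_nonneg, neg_abs_le, sub_nonneg, le_abs_self])
    have := trace_mul_psd_re_nonneg hpsd hApsd
    rw [Matrix.sub_mul, trace_sub, Complex.sub_re] at this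
    linarith
  have h3 : -(((A - B) * B).trace).re ≤ ((cd V (fun i => |g i|) * B).trace).re := by
    have hpsd : (cd V (fun i => |g i|) + (A - B)).PosSemidef := by
      rw [hCeq, cd_add]
      exact cd_posSemidef _ (fun i => by
        have := neg_abs_le (g i); linarith)
    have := trace_mul_psd_re_nonneg hpsd hBpsd
    rw [Matrix.add_mul, trace_add, Complex.add_re] at this
    linarith
  have h1 : (((A - B) * (A - B)).trace).re
      = (((A - B) * A).trace).re - (((A - B) * B).trace).re := by
    rw [Matrix.mul_sub, trace_sub, Complex.sub_re]
  have hAA : A * A = R := matSqrt_mul_self' hR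
  have hBB : B * B = R' := matSqrt_mul_self' hR'
  have hsplit : R - R' = A * (A - B) + (A - B) * B := by
    rw [Matrix.mul_sub, Matrix.sub_mul, hAA, hBB, sub_add_sub_cancel]
  have h4 : ((cd V (fun i => |g i|) * A).trace).re + ((cd V (fun i => |g i|) * B).trace).re
      = ((Wᴴ * (R - R')).trace).re := by
    rw [hWh, hsplit, Matrix.mul_add, trace_add, Complex.add_re]
    refine congrArg₂ (· + ·) ?_ ?_
    · have he : (W * (A * (A - B))).trace = ((A - B) * W * A).trace := by
        rw [← Matrix.mul_assoc, Matrix.trace_mul_cycle]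
      rw [he, habs']
    · rw [← Matrix.mul_assoc, habs]
  have h5 : ((Wᴴ * (R - R')).trace).re ≤ traceNorm (R - R') := by
    apply re_trace_le_traceNorm_s16
    rw [hWunit, sub_self]
    exact Matrix.PosSemidef.zero
  linarith

end FidelityAux

/-- Continuity of the fidelity with respect to the trace norm:
`|F(ρ,σ) - F(ρ',σ)|² ≤ ‖ρ - ρ'‖₁ · tr σ`. -/
theorem fidelity_continuous_traceNorm
    {ι : Type*} [Fintype ι]
    (ρ ρ' σ : Matrix ι ι ℂ) (hρ : ρ.PosSemidef) (hρ' : ρ'.PosSemidef) (hσ : σ.PosSemidef) :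
    |fid ρ σ - fid ρ' σ| ^ 2 ≤ traceNorm (ρ - ρ') * σ.trace.re := by
  classical
  set A := matSqrt ρ with hA
  set B := matSqrt ρ' with hB
  set S := matSqrt σ with hS
  have hSh : Sᴴ = S := (matSqrt_posSemidef hσ).1
  have hSS : S * S = σ := matSqrt_mul_self' hσ
  have hDh : (A - B)ᴴ = A - B := (matSqrt_posSemidef hρ).1.sub (matSqrt_posSemidef hρ').1
  set t := traceNorm ((A - B) * S) with ht
  have step1 : |fid ρ σ - fid ρ' σ| ≤ t := by
    rw [abs_sub_le_iff]
    constructor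
    · have hsplit : A * S = (A - B) * S + B * S := by
        rw [Matrix.sub_mul, sub_add_cancel]
      have : fid ρ σ ≤ t + fid ρ' σ := by
        show traceNorm (A * S) ≤ t + traceNorm (B * S)
        rw [hsplit]
        exact traceNorm_triangle _ _
      linarith
    · have hsplit : B * S = (A - B) * S * (-1) + A * S := by
        rw [Matrix.mul_neg, Matrix.mul_one, Matrix.sub_mul]
        abel
      have hneg : traceNorm ((A - B) * S * (-1)) = t := by
        rw [show (A - B) * S * (-1) = -((A - B) * S) from by
          rw [Matrix.mul_neg, Matrix.mul_one], traceNorm_neg]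
      have : fid ρ' σ ≤ t + fid ρ σ := by
        show traceNorm (B * S) ≤ t + traceNorm (A * S)
        rw [hsplit]
        exact le_trans (traceNorm_triangle _ _) (by rw [hneg])
      linarith
  have step2 : t ≤ Real.sqrt ((((A - B)ᴴ * (A - B)).trace).re)
      * Real.sqrt (((Sᴴ * S).trace).re) := traceNorm_mul_le (A - B) S
  have hσtr : ((Sᴴ * S).trace).re = σ.trace.re := by rw [hSh, hSS]
  have ha0 : 0 ≤ (((A - B)ᴴ * (A - B)).trace).re := trace_sq_re_nonneg _
  have hb0 : 0 ≤ σ.trace.re := psd_trace_re_nonneg hσ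
  have step3 : (((A - B)ᴴ * (A - B)).trace).re ≤ traceNorm (ρ - ρ') := by
    rw [hDh]
    exact powers_stormer hρ hρ'
  have habs0 : 0 ≤ |fid ρ σ - fid ρ' σ| := abs_nonneg _
  have hle : |fid ρ σ - fid ρ' σ| ≤ Real.sqrt ((((A - B)ᴴ * (A - B)).trace).re)
      * Real.sqrt (σ.trace.re) := by
    rw [← hσtr]
    exact le_trans step1 step2
  calc |fid ρ σ - fid ρ' σ| ^ 2
      ≤ (Real.sqrt ((((A - B)ᴴ * (A - B)).trace).re) * Real.sqrt (σ.trace.re)) ^ 2 :=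
        pow_le_pow_left₀ habs0 hle 2
    _ = (((A - B)ᴴ * (A - B)).trace).re * σ.trace.re := by
        rw [mul_pow, Real.sq_sqrt ha0, Real.sq_sqrt hb0]
    _ ≤ traceNorm (ρ - ρ') * σ.trace.re := mul_le_mul_of_nonneg_right step3 hb0

end QMarkov
end
end
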